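/- (Theorem 3, Property 5) Let C be an initial configuration of the BRP in which every stack is nonempty, and let V be a virtual layer of C satisfying the conditions of Property 5. Then every feasible move sequence for C contains at least one non-BG relocation of a block of V; that is, f_nonBG(V) ≥ 1. -/

import Mathlib

/-- A configuration of the BRP: each stack holds a list of blocks, bottom to top. -/
abbrev Config (B S : ℕ) := Fin S → List (Fin B)

/-- Every block occurs exactly once among the stacks. -/
def IsConfig {B S : ℕ} (C : Config B S) : Prop :=
  ∀ b : Fin B, (∑ s : Fin S, (C s).count b) = 1

/-- `a` lies strictly below `b` in stack `s` of `C`. -/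
def StrictlyBelow {B S : ℕ} (C : Config B S) (s : Fin S) (a b : Fin B) : Prop :=
  ∃ i j : ℕ, i < j ∧ (C s)[i]? = some a ∧ (C s)[j]? = some b

/-- A block is badly placed if some smaller-labelled block lies below it in its stack. -/
def BadlyPlaced {B S : ℕ} (C : Config B S) (b : Fin B) : Prop :=
  ∃ s a, a < b ∧ StrictlyBelow C s a b

/-- Moves: retrieve the top block of a stack, or relocate the top block of one
stack onto another stack. -/
inductive Move (S : ℕ) where
  | retrieve (s : Fin S)
  | relocate (src dst : Fin S)

def applyMove {B S : ℕ} (C : Config B S) : Move S → Config B S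
  | .retrieve s => Function.update C s (C s).dropLast
  | .relocate src dst =>
    match (C src).getLast? with
    | some b =>
      let C' := Function.update C src (C src).dropLast
      Function.update C' dst (C' dst ++ [b])
    | none => C

def Enabled {B S : ℕ} (C : Config B S) : Move S → Prop
  | .retrieve s => ∃ b, (C s).getLast? = some b ∧ ∀ (s' : Fin S), ∀ b' ∈ C s', b ≤ b'
  | .relocate src dst => src ≠ dst ∧ C src ≠ []

def play {B S : ℕ} (C : Config B S) : List (Move S) → Config B S
  | [] => C
  | m :: ms => play (applyMove C m) ms

def AllEnabled {B S : ℕ} (C : Config B S) : List (Move S) → Prop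
  | [] => True
  | m :: ms => Enabled C m ∧ AllEnabled (applyMove C m) ms

/-- A feasible move sequence: every move is enabled and at the end all blocks
have been retrieved. -/
def Feasible {B S : ℕ} (C : Config B S) (ms : List (Move S)) : Prop :=
  AllEnabled C ms ∧ ∀ s, play C ms s = []

/-- `b` is the block moved by `m` (a relocation) performed in configuration `C`. -/
def MovedBlock {B S : ℕ} (C : Config B S) (m : Move S) (b : Fin B) : Prop :=
  ∃ src dst, m = .relocate src dst ∧ src ≠ dst ∧ (C src).getLast? = some b

/-- The four types of relocation moves. -/
inductive MType where
  | BB | BG | GB | GG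

/-- The relocation `m`, moving block `b` from configuration `C`, has the given type. -/
def MTypeOf {B S : ℕ} (C : Config B S) (m : Move S) (b : Fin B) : MType → Prop
  | .BB => BadlyPlaced C b ∧ BadlyPlaced (applyMove C m) b
  | .BG => BadlyPlaced C b ∧ ¬ BadlyPlaced (applyMove C m) b
  | .GB => ¬ BadlyPlaced C b ∧ BadlyPlaced (applyMove C m) b
  | .GG => ¬ BadlyPlaced C b ∧ ¬ BadlyPlaced (applyMove C m) b

/-- `m` is a relocation of a block of `𝔅`. -/
def RelocIn {B S : ℕ} (𝔅 : Set (Fin B)) (C : Config B S) (m : Move S) : Prop :=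
  ∃ b ∈ 𝔅, MovedBlock C m b

/-- `m` is a relocation of a block of `𝔅` of type `mt`. -/
def RelocTypeIn {B S : ℕ} (mt : MType) (𝔅 : Set (Fin B)) (C : Config B S) (m : Move S) : Prop :=
  ∃ b ∈ 𝔅, MovedBlock C m b ∧ MTypeOf C m b mt

/-- `m` is a non-BG relocation of a block of `𝔅`. -/
def RelocNonBGIn {B S : ℕ} (𝔅 : Set (Fin B)) (C : Config B S) (m : Move S) : Prop :=
  ∃ b ∈ 𝔅, MovedBlock C m b ∧ ¬ MTypeOf C m b MType.BG

/-- Count the moves of a sequence satisfying `P` (evaluated in the configuration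
in which each move is performed). -/
noncomputable def countMoves {B S : ℕ} (P : Config B S → Move S → Prop) :
    Config B S → List (Move S) → ℕ
  | _, [] => 0
  | C, m :: ms =>
    (@ite ℕ (P C m) (Classical.propDecidable _) 1 0) + countMoves P (applyMove C m) ms

/-- Minimum over feasible move sequences of the number of moves satisfying `P`. -/
noncomputable def fMin {B S : ℕ} (C : Config B S) (P : Config B S → Move S → Prop) : ℕ :=
  sInf { n | ∃ ms, Feasible C ms ∧ countMoves P C ms = n }

/-- `f(𝔅)`: least number of relocations applied to blocks of `𝔅`. -/
noncomputable def fRel {B S : ℕ} (C : Config B S) (𝔅 : Set (Fin B)) : ℕ :=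
  fMin C (RelocIn 𝔅)

/-- `f_mt(𝔅)`: least number of type-`mt` relocations applied to blocks of `𝔅`. -/
noncomputable def fTyp {B S : ℕ} (C : Config B S) (mt : MType) (𝔅 : Set (Fin B)) : ℕ :=
  fMin C (RelocTypeIn mt 𝔅)

/-- `f_nonBG(𝔅)`: least number of non-BG relocations applied to blocks of `𝔅`. -/
noncomputable def fNonBG {B S : ℕ} (C : Config B S) (𝔅 : Set (Fin B)) : ℕ :=
  fMin C (RelocNonBGIn 𝔅)

/-- The top 1st layer: the topmost block of each stack. -/
def TopLayer {B S : ℕ} (C : Config B S) : Set (Fin B) :=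
  {b | ∃ s, (C s).getLast? = some b}

/-- The top `k` layers: the topmost `k` blocks of every stack. -/
def TopK {B S : ℕ} (C : Config B S) (k : ℕ) : Set (Fin B) :=
  {b | ∃ s, b ∈ (C s).drop ((C s).length - k)}

/-- The top `j`-th layer: the `j`-th block from the top of every stack. -/
def TopJth {B S : ℕ} (C : Config B S) (j : ℕ) : Set (Fin B) :=
  {b | ∃ s, (C s)[(C s).length - j]? = some b}

/-- A virtual layer: a set of blocks containing exactly one block from each stack. -/
def VirtualLayer {B S : ℕ} (C : Config B S) (V : Set (Fin B)) : Prop :=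
  ∀ s : Fin S, ∃! b : Fin B, b ∈ V ∧ b ∈ C s

/-- `a` lies at or below the `V`-block of stack `s`. -/
def AtOrBelowLayer {B S : ℕ} (C : Config B S) (V : Set (Fin B)) (s : Fin S) (a : Fin B) : Prop :=
  ∃ b j, b ∈ V ∧ (C s)[j]? = some b ∧ a ∈ (C s).take (j + 1)

/-- `V` is a virtual layer satisfying the conditions of Property 5:
(1) in some stack, a block strictly below the `V`-block of that stack has a smaller
label than every block of `V`; (2) every badly placed block of `V` has a label
strictly greater than the minimum label present in stack `s` after deleting all
blocks strictly above the `V`-block of `s`, for every stack `s`. -/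
def P5 {B S : ℕ} (C : Config B S) (V : Set (Fin B)) : Prop :=
  VirtualLayer C V ∧
  (∃ s a b, b ∈ V ∧ StrictlyBelow C s a b ∧ ∀ c ∈ V, a < c) ∧
  (∀ b ∈ V, BadlyPlaced C b → ∀ s : Fin S, ∃ a, AtOrBelowLayer C V s a ∧ a < b)

/-- A pair of virtual layers `V₁` (upper), `V₂` (lower) with shared well-placed
block `bstar` satisfying the conditions of Property 7. -/
def P7 {B S : ℕ} (C : Config B S) (V₁ V₂ : Set (Fin B)) (bstar : Fin B) : Prop :=
  V₁ ∩ V₂ = {bstar} ∧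
  ¬ BadlyPlaced C bstar ∧
  (∀ s : Fin S, bstar ∉ C s →
    ∃ b₁ b₂, b₁ ∈ V₁ ∧ b₂ ∈ V₂ ∧ StrictlyBelow C s b₂ b₁) ∧
  P5 C V₁ ∧ P5 C V₂ ∧
  (∀ s : Fin S, ∃ a, AtOrBelowLayer C V₁ s a ∧ a ≤ bstar) ∧
  (∃ s : Fin S, ∀ a, AtOrBelowLayer C V₁ s a → bstar ≤ a)

/-- Push blocks one by one onto the indicated stacks. -/
def pushAll {B S : ℕ} (C : Config B S) : List (Fin B × Fin S) → Config B S
  | [] => C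
  | p :: rest => pushAll (Function.update C p.2 (C p.2 ++ [p.1])) rest

/-- The blocks lying strictly above position `i` of stack `s`, listed from the
top of the stack downward (the processing order of the experiment). -/
def aboveList {B S : ℕ} (C : Config B S) (s : Fin S) (i : ℕ) : List (Fin B) :=
  ((C s).drop (i + 1)).reverse

/-- The arrangement resulting from the experiment of Property 4: the blocks above
position `i` of stack `s` are relocated exactly once, from the top downward, onto
the stacks listed in `ds`. -/
def expResult {B S : ℕ} (C : Config B S) (s : Fin S) (i : ℕ) (ds : List (Fin S)) :
    Config B S :=
  pushAll (Function.update C s ((C s).take (i + 1))) ((aboveList C s i).zip ds)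

/-- The condition of Property 4 (target block at position `i` of stack `sStar`):
in every experiment, some relocated block ends badly placed. -/
def P4Cond {B S : ℕ} (C : Config B S) (sStar : Fin S) (i : ℕ) : Prop :=
  ∀ ds : List (Fin S), ds.length = (aboveList C sStar i).length →
    (∀ d ∈ ds, d ≠ sStar) →
    ∃ b ∈ aboveList C sStar i, BadlyPlaced (expResult C sStar i ds) b

/-- The set `𝔅⁴`: the blocks above the target block together with, for each
nonempty stack other than the target's stack, its block of minimum label. -/
def B4Set {B S : ℕ} (C : Config B S) (sStar : Fin S) (i : ℕ) : Set (Fin B) :=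
  {b | b ∈ aboveList C sStar i} ∪
  {b | ∃ s, s ≠ sStar ∧ b ∈ C s ∧ ∀ b' ∈ C s, b ≤ b'}

/-- The number of direct blockages: adjacent pairs in a stack whose upper block
has a strictly larger label. -/
def directBlockages {B S : ℕ} (C : Config B S) : ℕ :=
  ∑ s : Fin S, (((C s).zip (C s).tail).filter (fun p => decide (p.1 < p.2))).length

/-- The number of relocations in a move sequence. -/
def relocCount {S : ℕ} (ms : List (Move S)) : ℕ :=
  (ms.filter (fun m => match m with | Move.relocate _ _ => true | Move.retrieve _ => false)).length

/-- The minimum number of relocations over all feasible move sequences. -/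
noncomputable def fAll {B S : ℕ} (C : Config B S) : ℕ :=
  sInf { n | ∃ ms, Feasible C ms ∧ relocCount ms = n }

/-- `g(L)`: `L` plus the minimum number of direct blockages over all partial
plans with exactly `L` relocations. -/
noncomputable def gIter {B S : ℕ} (C : Config B S) (L : ℕ) : ℕ :=
  L + sInf { d | ∃ ms : List (Move S), AllEnabled C ms ∧ relocCount ms = L ∧
      d = directBlockages (play C ms) }

namespace BRPaux

theorem sum_change_one {S : ℕ} {f g : Fin S → ℕ} (s : Fin S) (h : ∀ t, t ≠ s → g t = f t) :
    (∑ t, g t) + f s = (∑ t, f t) + g s := by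
  have h1 := Finset.add_sum_erase Finset.univ g (Finset.mem_univ s)
  have h2 := Finset.add_sum_erase Finset.univ f (Finset.mem_univ s)
  have h3 : ∑ t ∈ Finset.univ.erase s, g t = ∑ t ∈ Finset.univ.erase s, f t :=
    Finset.sum_congr rfl fun t ht => h t (Finset.mem_erase.1 ht).1
  omega

theorem sum_change_two {S : ℕ} {f g : Fin S → ℕ} (s₁ s₂ : Fin S) (h12 : s₁ ≠ s₂)
    (h : ∀ t, t ≠ s₁ → t ≠ s₂ → g t = f t) :
    (∑ t, g t) + f s₁ + f s₂ = (∑ t, f t) + g s₁ + g s₂ := by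
  set h' : Fin S → ℕ := Function.update f s₁ (g s₁) with hh
  have e1 : (∑ t, g t) + h' s₂ = (∑ t, h' t) + g s₂ := by
    apply sum_change_one
    intro t ht
    by_cases hts : t = s₁
    · subst hts; simp [hh]
    · simp [hh, Function.update_of_ne hts, h t hts ht]
  have e2 : (∑ t, h' t) + f s₁ = (∑ t, f t) + h' s₁ :=
    sum_change_one _ fun t ht => by simp [hh, Function.update_of_ne ht]
  have e3 : h' s₂ = f s₂ := by simp [hh, Function.update_of_ne (Ne.symm h12)]
  have e4 : h' s₁ = g s₁ := by simp [hh]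
  omega

theorem sum_le_two_stacks {S : ℕ} (f : Fin S → ℕ) {s₁ s₂ : Fin S} (h : s₁ ≠ s₂) :
    f s₁ + f s₂ ≤ ∑ t, f t := by
  have h1 := Finset.add_sum_erase Finset.univ f (Finset.mem_univ s₁)
  have h2 := Finset.add_sum_erase (Finset.univ.erase s₁) f
    (Finset.mem_erase.2 ⟨Ne.symm h, Finset.mem_univ s₂⟩)
  omega

theorem single_le_sum' {S : ℕ} (f : Fin S → ℕ) (s : Fin S) : f s ≤ ∑ t, f t :=
  Finset.single_le_sum (fun _ _ => Nat.zero_le _) (Finset.mem_univ s)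

def totCount {B S : ℕ} (D : Config B S) (x : Fin B) : ℕ := ∑ s, (D s).count x

def totLen {B S : ℕ} (D : Config B S) : ℕ := ∑ s, (D s).length

theorem applyMove_retrieve {B S : ℕ} (D : Config B S) (s : Fin S) :
    applyMove D (.retrieve s) = Function.update D s (D s).dropLast := rfl

theorem applyMove_relocate {B S : ℕ} (D : Config B S) {src dst : Fin S} {b : Fin B}
    (h : (D src).getLast? = some b) :
    applyMove D (.relocate src dst) =
      Function.update (Function.update D src (D src).dropLast) dst
        ((Function.update D src (D src).dropLast) dst ++ [b]) := by
  simp [applyMove, h]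


theorem totCount_retrieve_le {B S : ℕ} (D : Config B S) (s : Fin S) (x : Fin B) :
    totCount (applyMove D (.retrieve s)) x ≤ totCount D x := by
  apply Finset.sum_le_sum
  intro t _
  by_cases hts : t = s
  · subst hts
    simp only [applyMove_retrieve, Function.update_self]
    exact ((D t).dropLast_sublist).count_le x
  · simp [applyMove_retrieve, Function.update_of_ne hts]

theorem count_dropLast_add {B : ℕ} {l : List (Fin B)} {b : Fin B}
    (h : l.getLast? = some b) (x : Fin B) :
    l.dropLast.count x + [b].count x = l.count x := by
  conv_rhs => rw [← List.dropLast_append_getLast? b h]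
  rw [List.count_append]

theorem totCount_relocate {B S : ℕ} (D : Config B S) {src dst : Fin S} {b : Fin B}
    (h : (D src).getLast? = some b) (hne : src ≠ dst) (x : Fin B) :
    totCount (applyMove D (.relocate src dst)) x = totCount D x := by
  set E := applyMove D (.relocate src dst) with hE
  have hEsrc : E src = (D src).dropLast := by
    rw [hE, applyMove_relocate D h, Function.update_of_ne hne, Function.update_self]
  have hEdst : E dst = D dst ++ [b] := by
    rw [hE, applyMove_relocate D h]
    simp [Function.update_self, Function.update_of_ne (Ne.symm hne)]
  have hEo : ∀ t, t ≠ src → t ≠ dst → E t = D t := by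
    intro t h1 h2
    rw [hE, applyMove_relocate D h, Function.update_of_ne h2, Function.update_of_ne h1]
  have key : (∑ t, (E t).count x) + (D src).count x + (D dst).count x
      = (∑ t, (D t).count x) + (E src).count x + (E dst).count x :=
    sum_change_two src dst hne (fun t h1 h2 =>
      show (E t).count x = (D t).count x by rw [hEo t h1 h2])
  have h1 : (E src).count x + [b].count x = (D src).count x := by
    rw [hEsrc]; exact count_dropLast_add h x
  have h2 : (E dst).count x = (D dst).count x + [b].count x := by
    rw [hEdst, List.count_append]
  simp only [totCount]
  omega

theorem totLen_retrieve {B S : ℕ} (D : Config B S) {s : Fin S} (hs : D s ≠ []) :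
    totLen (applyMove D (.retrieve s)) + 1 = totLen D := by
  set E := applyMove D (.retrieve s) with hE
  have key : (∑ t, (E t).length) + (D s).length = (∑ t, (D t).length) + (E s).length :=
    sum_change_one s (fun t h1 =>
      show (E t).length = (D t).length by
        rw [hE, applyMove_retrieve, Function.update_of_ne h1])
  have h1 : (E s).length + 1 = (D s).length := by
    rw [hE, applyMove_retrieve, Function.update_self, List.length_dropLast]
    have := List.length_pos_iff.2 hs
    omega
  simp only [totLen]
  omega

theorem totLen_relocate {B S : ℕ} (D : Config B S) {src dst : Fin S} {b : Fin B}
    (h : (D src).getLast? = some b) (hne : src ≠ dst) :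
    totLen (applyMove D (.relocate src dst)) = totLen D := by
  set E := applyMove D (.relocate src dst) with hE
  have hEsrc : E src = (D src).dropLast := by
    rw [hE, applyMove_relocate D h, Function.update_of_ne hne, Function.update_self]
  have hEdst : E dst = D dst ++ [b] := by
    rw [hE, applyMove_relocate D h]
    simp [Function.update_self, Function.update_of_ne (Ne.symm hne)]
  have key : (∑ t, (E t).length) + (D src).length + (D dst).length
      = (∑ t, (D t).length) + (E src).length + (E dst).length :=
    sum_change_two src dst hne (fun t h1 h2 =>
      show (E t).length = (D t).length by
        rw [hE, applyMove_relocate D h, Function.update_of_ne h2, Function.update_of_ne h1])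
  have hpos : D src ≠ [] := by
    intro hc; rw [hc] at h; simp at h
  have := List.length_pos_iff.2 hpos
  have h1 : (E src).length + 1 = (D src).length := by
    rw [hEsrc, List.length_dropLast]; omega
  have h2 : (E dst).length = (D dst).length + 1 := by
    rw [hEdst, List.length_append]; rfl
  simp only [totLen]
  omega

/-- two distinct positions holding `x` force count ≥ 2. -/
theorem two_le_count_of_getElem? {B : ℕ} {l : List (Fin B)} {x : Fin B} {i k : ℕ}
    (hi : l[i]? = some x) (hk : l[k]? = some x) (hik : i ≠ k) : 2 ≤ l.count x := by
  wlog hlt : i < k generalizing i k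
  · exact this hk hi (Ne.symm hik) (by omega)
  have hk' : i + 1 ≤ k := hlt
  have hsplit : l = l.take (i+1) ++ l.drop (i+1) := (List.take_append_drop _ _).symm
  have h1 : x ∈ l.take (i+1) := by
    rw [List.mem_iff_getElem?]
    exact ⟨i, by rw [List.getElem?_take_of_lt (Nat.lt_succ_self i)]; exact hi⟩
  have h2 : x ∈ l.drop (i+1) := by
    rw [List.mem_iff_getElem?]
    refine ⟨k - (i+1), ?_⟩
    rw [List.getElem?_drop]
    rwa [Nat.add_sub_cancel' hk']
  calc 2 = 1 + 1 := rfl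
    _ ≤ (l.take (i+1)).count x + (l.drop (i+1)).count x :=
        Nat.add_le_add (List.one_le_count_iff.2 h1) (List.one_le_count_iff.2 h2)
    _ = l.count x := by rw [← List.count_append, ← hsplit]

end BRPaux


namespace BRPaux

theorem getElem?_of_prefix {B : ℕ} {P l : List (Fin B)} (h : P <+: l) {i : ℕ}
    (hi : i < P.length) : l[i]? = P[i]? := by
  obtain ⟨t, rfl⟩ := h
  exact List.getElem?_append_left hi

theorem prefix_dropLast {B : ℕ} {P l : List (Fin B)} (h : P <+: l)
    (hlt : P.length < l.length) : P <+: l.dropLast := by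
  have h1 : P = l.take P.length := List.prefix_iff_eq_take.1 h
  have h2 : l.dropLast = l.take (l.length - 1) := List.dropLast_eq_take
  have h3 : P = (l.dropLast).take P.length := by
    rw [h2, List.take_take, Nat.min_def, if_pos (by omega)]
    exact h1
  rw [h3]
  exact List.take_prefix _ _

theorem exists_stack_of_totCount {B S : ℕ} {D : Config B S} {x : Fin B}
    (h : 1 ≤ totCount D x) : ∃ s, x ∈ D s := by
  by_contra hc
  push_neg at hc
  have : totCount D x = 0 :=
    Finset.sum_eq_zero fun s _ => List.count_eq_zero.2 (hc s)
  omega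

theorem count_two_stacks {B S : ℕ} (D : Config B S) (b : Fin B) {s₁ s₂ : Fin S}
    (h : s₁ ≠ s₂) : (D s₁).count b + (D s₂).count b ≤ totCount D b := by
  exact sum_le_two_stacks (fun t => (D t).count b) h

theorem count_single {B S : ℕ} (D : Config B S) (b : Fin B) (s : Fin S) :
    (D s).count b ≤ totCount D b := by
  exact single_le_sum' (fun t => (D t).count b) s

theorem mem_totCount {B S : ℕ} (D : Config B S) {x : Fin B} {s : Fin S}
    (h : x ∈ D s) : 1 ≤ totCount D x :=
  le_trans (List.one_le_count_iff.2 h) (single_le_sum' (fun t => (D t).count x) s)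

theorem brp_key {B S : ℕ} {C : Config B S} {V : Set (Fin B)} {v : Fin S → Fin B} {j : Fin S → ℕ}
    {s₀ : Fin S} {i₀ : ℕ} {a₀ : Fin B}
    (hv : ∀ s, (C s)[j s]? = some (v s))
    (hvV : ∀ s, v s ∈ V)
    (hvuniq : ∀ s x, x ∈ V → x ∈ C s → x = v s)
    (hCtot : ∀ x, totCount C x = 1)
    (hi₀ : i₀ < j s₀)
    (ha₀ : (C s₀)[i₀]? = some a₀)
    (ha₀small : ∀ c ∈ V, a₀ < c)
    (hBPcond : ∀ b ∈ V, BadlyPlaced C b → ∀ s : Fin S, ∃ a, AtOrBelowLayer C V s a ∧ a < b) :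
    ∀ ms : List (Move S), ∀ D : Config B S,
      (∀ x, totCount D x ≤ 1) → (∀ s, (C s).take (j s + 1) <+: D s) →
      AllEnabled D ms → (∀ s, play D ms s = []) →
      1 ≤ countMoves (RelocNonBGIn V) D ms := by
  -- preliminaries about C
  have hjlt : ∀ s, j s < (C s).length := fun s => (List.getElem?_eq_some_iff.1 (hv s)).1
  have hlenP : ∀ s, ((C s).take (j s + 1)).length = j s + 1 := by
    intro s
    rw [List.length_take]
    have := hjlt s
    omega
  have hPget : ∀ s (i : ℕ), i < j s + 1 → ((C s).take (j s + 1))[i]? = (C s)[i]? :=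
    fun s i hi => List.getElem?_take_of_lt hi
  -- a₀ is in the protected prefix of s₀, hence present as long as the invariant holds
  have ha₀D : ∀ D : Config B S, (∀ s, (C s).take (j s + 1) <+: D s) → (D s₀)[i₀]? = some a₀ := by
    intro D hpre
    rw [getElem?_of_prefix (hpre s₀) (by rw [hlenP]; omega)]
    rw [hPget s₀ i₀ (by omega)]
    exact ha₀
  intro ms
  induction ms with
  | nil =>
    intro D _ hpre _ hend
    exfalso
    have := ha₀D D hpre
    rw [show play D [] = D from rfl] at hend
    rw [hend s₀] at this
    simp at this
  | cons m rest ih =>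
    intro D hcnt hpre hen hend
    obtain ⟨henm, henrest⟩ := hen
    have hendr : ∀ s, play (applyMove D m) rest s = [] := hend
    by_cases hP : RelocNonBGIn V D m
    · simp only [countMoves]
      rw [if_pos hP]
      omega
    · simp only [countMoves]
      rw [if_neg hP]
      rw [Nat.zero_add]
      -- m preserves the invariant
      cases m with
      | retrieve s =>
        obtain ⟨b, hgl, hmin⟩ := henm
        -- the stack s must be strictly longer than its protected prefix
        have hlt : j s + 1 < (D s).length := by
          rcases Nat.lt_or_ge (j s + 1) (D s).length with h | h
          · exact h
          · exfalso
            have hple : ((C s).take (j s + 1)).length ≤ (D s).length :=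
              (hpre s).length_le
            rw [hlenP] at hple
            have heq : (C s).take (j s + 1) = D s :=
              (hpre s).eq_of_length (by rw [hlenP]; omega)
            have hb : b = v s := by
              have h1 : (D s).getLast? = (D s)[(D s).length - 1]? :=
                List.getLast?_eq_getElem?
              rw [hgl] at h1
              rw [← heq, hlenP] at h1
              simp only [Nat.add_sub_cancel] at h1
              rw [hPget s (j s) (by omega), hv s] at h1
              exact (Option.some.inj h1)
            have ha₀mem : a₀ ∈ D s₀ :=
              List.mem_iff_getElem?.2 ⟨i₀, ha₀D D hpre⟩
            have h2 := hmin s₀ a₀ ha₀mem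
            have h3 := ha₀small (v s) (hvV s)
            rw [hb] at h2
            exact absurd h2 (not_le.2 h3)
        refine ih (applyMove D (.retrieve s)) ?_ ?_ henrest hendr
        · exact fun x => le_trans (totCount_retrieve_le D s x) (hcnt x)
        · intro t
          by_cases hts : t = s
          · subst hts
            rw [applyMove_retrieve, Function.update_self]
            exact prefix_dropLast (hpre t) (by rw [hlenP]; omega)
          · rw [applyMove_retrieve, Function.update_of_ne hts]
            exact hpre t
      | relocate src dst =>
        obtain ⟨hsd, hnnil⟩ := henm
        obtain ⟨b, hgl⟩ := Option.isSome_iff_exists.1 (List.getLast?_isSome.2 hnnil)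
        have hvD : ∀ u, (D u)[j u]? = some (v u) := by
          intro u
          rw [getElem?_of_prefix (hpre u) (by rw [hlenP]; omega)]
          rw [hPget u (j u) (by omega)]
          exact hv u
        by_cases hbV : b ∈ V
        · -- a relocation of a V-block must be non-BG: contradiction with hP
          exfalso
          apply hP
          refine ⟨b, hbV, ⟨src, dst, rfl, hsd, hgl⟩, ?_⟩
          rintro ⟨hBPb, hnBP'⟩
          apply hnBP'
          -- b lives (only) at the top of src, which equals its protected prefix
          have hb_at : (D src)[(D src).length - 1]? = some b := by
            rw [← List.getLast?_eq_getElem?]; exact hgl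
          have hbD : ∀ u, b ∈ D u → u = src := by
            intro u hmem
            by_contra hne
            have h1 : 1 ≤ (D u).count b := List.one_le_count_iff.2 hmem
            have h2 : 1 ≤ (D src).count b :=
              List.one_le_count_iff.2 (List.mem_iff_getElem?.2 ⟨_, hb_at⟩)
            have h3 := count_two_stacks D b hne
            have h4 := hcnt b
            omega
          -- locate b in C : it is the V-block of src
          obtain ⟨t, hbt⟩ :=
            exists_stack_of_totCount (B := B) (D := C) (x := b) (le_of_eq (hCtot b).symm)
          have hbvt : b = v t := hvuniq t b hbV hbt
          have hts : t = src :=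
            hbD t (List.mem_iff_getElem?.2 ⟨j t, by rw [hvD t, ← hbvt]⟩)
          have hbv : b = v src := by rw [hbvt, hts]
          have hcntsrc : (D src).count b ≤ 1 :=
            le_trans (count_single D b src) (hcnt b)
          have hbj : (D src)[j src]? = some b := by rw [hvD src, ← hbv]
          have hLpos : 0 < (D src).length := List.length_pos_iff.2 hnnil
          have hLj : (D src).length - 1 = j src := by
            by_contra hne
            exact absurd (two_le_count_of_getElem? hb_at hbj hne) (by omega)
          have hDsrc : D src = (C src).take (j src + 1) :=
            ((hpre src).eq_of_length (by rw [hlenP]; omega)).symm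
          -- b is badly placed in C
          obtain ⟨s', a, hab, i', k', hik, hai, hbk⟩ := hBPb
          have hs' : s' = src := hbD s' (List.mem_iff_getElem?.2 ⟨k', hbk⟩)
          rw [hs'] at hai hbk
          have hk' : k' = j src := by
            by_contra hne
            exact absurd (two_le_count_of_getElem? hbk hbj hne) (by omega)
          have hiC : (C src)[i']? = some a := by
            rw [← hPget src i' (by omega), ← hDsrc]
            exact hai
          have hBPC : BadlyPlaced C b :=
            ⟨src, a, hab, i', j src, by omega, hiC, by rw [hv src, ← hbv]⟩
          -- condition (2) provides a small block at-or-below the layer in dst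
          obtain ⟨a', ⟨b', jj, hb'V, hb'pos, ha'mem⟩, ha'b⟩ := hBPcond b hbV hBPC dst
          have hb'v : b' = v dst :=
            hvuniq dst b' hb'V (List.mem_iff_getElem?.2 ⟨jj, hb'pos⟩)
          have hCdstcnt : (C dst).count (v dst) ≤ 1 := by
            rw [← hCtot (v dst)]
            exact count_single C (v dst) dst
          have hjj : jj = j dst := by
            rw [hb'v] at hb'pos
            by_contra hne
            exact absurd (two_le_count_of_getElem? hb'pos (hv dst) hne) (by omega)
          subst hjj
          obtain ⟨ii, hii⟩ := List.mem_iff_getElem?.1 ha'mem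
          have hiilt : ii < j dst + 1 := by
            have := (List.getElem?_eq_some_iff.1 hii).1
            rw [hlenP] at this
            exact this
          have ha'D : (D dst)[ii]? = some a' := by
            rw [getElem?_of_prefix (hpre dst) (by rw [hlenP]; omega)]
            exact hii
          have hdstlen : j dst + 1 ≤ (D dst).length := by
            have := (hpre dst).length_le
            rw [hlenP] at this
            exact this
          -- after the move, a' sits strictly below b in dst
          have hEdst : applyMove D (.relocate src dst) dst = D dst ++ [b] := by
            rw [applyMove_relocate D hgl]
            rw [Function.update_self, Function.update_of_ne (Ne.symm hsd)]
          refine ⟨dst, a', ha'b, ii, (D dst).length, by omega, ?_, ?_⟩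
          · rw [hEdst]
            rw [List.getElem?_append_left (by omega)]
            exact ha'D
          · rw [hEdst]
            exact List.getElem?_concat_length
        · -- relocation of a non-V block: invariant preserved
          refine ih (applyMove D (.relocate src dst)) ?_ ?_ henrest hendr
          · exact fun x => le_of_eq (totCount_relocate D hgl hsd x) |>.trans (hcnt x)
          · intro u
            have hE := applyMove_relocate D hgl (dst := dst)
            by_cases hu1 : u = dst
            · subst hu1
              rw [hE, Function.update_self, Function.update_of_ne (Ne.symm hsd)]
              exact (hpre u).trans ⟨[b], rfl⟩
            · by_cases hu2 : u = src
              · subst hu2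
                rw [hE, Function.update_of_ne hu1, Function.update_self]
                -- length of D src exceeds the prefix, else the top would be v src ∈ V
                have hlt : j u + 1 < (D u).length := by
                  rcases Nat.lt_or_ge (j u + 1) (D u).length with h | h
                  · exact h
                  · exfalso
                    have hple : ((C u).take (j u + 1)).length ≤ (D u).length :=
                      (hpre u).length_le
                    rw [hlenP] at hple
                    have heq : (C u).take (j u + 1) = D u :=
                      (hpre u).eq_of_length (by rw [hlenP]; omega)
                    have hb : b = v u := by
                      have h1 : (D u).getLast? = (D u)[(D u).length - 1]? :=
                        List.getLast?_eq_getElem?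
                      rw [hgl] at h1
                      rw [← heq, hlenP] at h1
                      simp only [Nat.add_sub_cancel] at h1
                      rw [hPget u (j u) (by omega), hv u] at h1
                      exact (Option.some.inj h1)
                    exact hbV (hb ▸ hvV u)
                exact prefix_dropLast (hpre u) (by rw [hlenP]; omega)
              · rw [hE, Function.update_of_ne hu1, Function.update_of_ne hu2]
                exact hpre u

end BRPaux


namespace BRPaux

theorem play_append {B S : ℕ} (D : Config B S) (l₁ l₂ : List (Move S)) :
    play D (l₁ ++ l₂) = play (play D l₁) l₂ := by
  induction l₁ generalizing D with
  | nil => rfl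
  | cons m ms ih => simp only [List.cons_append, play]; exact ih _

theorem allEnabled_append {B S : ℕ} (D : Config B S) (l₁ l₂ : List (Move S)) :
    AllEnabled D (l₁ ++ l₂) ↔ AllEnabled D l₁ ∧ AllEnabled (play D l₁) l₂ := by
  induction l₁ generalizing D with
  | nil => simp [AllEnabled, play]
  | cons m ms ih =>
    simp only [List.cons_append, AllEnabled, play]
    constructor
    · rintro ⟨he, h⟩
      have h' := (ih (applyMove D m)).1 h
      exact ⟨⟨he, h'.1⟩, h'.2⟩
    · rintro ⟨⟨he, h1⟩, h2⟩
      exact ⟨he, (ih (applyMove D m)).2 ⟨h1, h2⟩⟩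

theorem clear_lemma {B S : ℕ} : ∀ (k : ℕ) (D : Config B S) (s s' : Fin S), s ≠ s' →
    ∀ p : ℕ, (D s).length = p + 1 + k →
    AllEnabled D (List.replicate k (.relocate s s')) ∧
    play D (List.replicate k (.relocate s s')) s = (D s).take (p+1) ∧
    (∀ x, totCount (play D (List.replicate k (.relocate s s'))) x = totCount D x) ∧
    totLen (play D (List.replicate k (.relocate s s'))) = totLen D := by
  intro k
  induction k with
  | zero =>
    intro D s s' _ p hlen
    refine ⟨trivial, ?_, fun x => rfl, rfl⟩
    show D s = (D s).take (p+1)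
    rw [List.take_of_length_le (by omega)]
  | succ k ih =>
    intro D s s' hss p hlen
    have hnnil : D s ≠ [] := by
      intro h; rw [h] at hlen; simp at hlen
    obtain ⟨b, hgl⟩ := Option.isSome_iff_exists.1 (List.getLast?_isSome.2 hnnil)
    have hEs : applyMove D (.relocate s s') s = (D s).dropLast := by
      rw [applyMove_relocate D hgl, Function.update_of_ne hss, Function.update_self]
    have hlenE : (applyMove D (.relocate s s') s).length = p + 1 + k := by
      rw [hEs, List.length_dropLast]; omega
    obtain ⟨ih1, ih2, ih3, ih4⟩ := ih (applyMove D (.relocate s s')) s s' hss p hlenE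
    have hrep : List.replicate (k+1) (Move.relocate s s' : Move S)
        = .relocate s s' :: List.replicate k (.relocate s s') := rfl
    rw [hrep]
    refine ⟨⟨⟨hss, hnnil⟩, ih1⟩, ?_, ?_, ?_⟩
    · show play (applyMove D (.relocate s s')) (List.replicate k (.relocate s s')) s
        = (D s).take (p+1)
      rw [ih2, hEs, List.dropLast_eq_take, List.take_take]
      congr 1
      omega
    · intro x
      exact (ih3 x).trans (totCount_relocate D hgl hss x)
    · exact ih4.trans (totLen_relocate D hgl hss)

theorem exists_feasible {B S : ℕ} (hS : 2 ≤ S) :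
    ∀ n (D : Config B S), totLen D = n →
      ∃ ms, AllEnabled D ms ∧ ∀ s, play D ms s = [] := by
  intro n
  induction n using Nat.strong_induction_on with
  | _ n ih =>
  intro D hlen
  by_cases h0 : n = 0
  · subst h0
    refine ⟨[], trivial, fun s => ?_⟩
    show D s = []
    have h1 : (D s).length ≤ totLen D := single_le_sum' (fun t => (D t).length) s
    rw [hlen] at h1
    exact List.length_eq_zero_iff.1 (by omega)
  · have hex : ∃ s : Fin S, D s ≠ [] := by
      by_contra hc
      push_neg at hc
      have : totLen D = 0 := Finset.sum_eq_zero (fun s _ => by rw [hc s]; rfl)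
      omega
    classical
    set Rem : Finset (Fin B) := Finset.univ.filter (fun x => ∃ s, x ∈ D s) with hRem
    have hRemNe : Rem.Nonempty := by
      obtain ⟨s1, hs1⟩ := hex
      obtain ⟨y, hy⟩ := List.exists_mem_of_ne_nil _ hs1
      exact ⟨y, Finset.mem_filter.2 ⟨Finset.mem_univ _, ⟨s1, hy⟩⟩⟩
    set x := Rem.min' hRemNe with hxdef
    obtain ⟨s, hxs⟩ := (Finset.mem_filter.1 (Rem.min'_mem hRemNe)).2
    obtain ⟨p, hp⟩ := List.mem_iff_getElem?.1 hxs
    have hplt : p < (D s).length := (List.getElem?_eq_some_iff.1 hp).1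
    obtain ⟨s', hss⟩ : ∃ s' : Fin S, s' ≠ s := by
      have : 1 < Fintype.card (Fin S) := by simp; omega
      exact Fintype.exists_ne_of_one_lt_card this s
    obtain ⟨h1, h2, h3, h4⟩ :=
      clear_lemma ((D s).length - (p+1)) D s s' (Ne.symm hss) p (by omega)
    have hEslen : (play D (List.replicate ((D s).length - (p+1)) (.relocate s s')) s).length
        = p + 1 := by
      rw [h2, List.length_take]; omega
    have hgl : (play D (List.replicate ((D s).length - (p+1)) (.relocate s s')) s).getLast?
        = some x := by
      rw [List.getLast?_eq_getElem?, hEslen, Nat.add_sub_cancel, h2,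
        List.getElem?_take_of_lt (Nat.lt_succ_self p)]
      exact hp
    have hmin : ∀ t, ∀ y ∈ play D (List.replicate ((D s).length - (p+1)) (.relocate s s')) t,
        x ≤ y := by
      intro t y hy
      have hy1 : 1 ≤ totCount (play D (List.replicate ((D s).length - (p+1)) (.relocate s s'))) y :=
        mem_totCount _ hy
      rw [h3 y] at hy1
      obtain ⟨t', hyt'⟩ := exists_stack_of_totCount hy1
      exact Rem.min'_le y (Finset.mem_filter.2 ⟨Finset.mem_univ _, ⟨t', hyt'⟩⟩)
    have hne2 : play D (List.replicate ((D s).length - (p+1)) (.relocate s s')) s ≠ [] := by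
      intro hc; rw [hc] at hgl; simp at hgl
    have hFlen : totLen (applyMove (play D (List.replicate ((D s).length - (p+1)) (.relocate s s')))
        (.retrieve s)) + 1 = totLen D := by
      rw [← h4]
      exact totLen_retrieve _ hne2
    obtain ⟨ms2, hms2a, hms2b⟩ := ih (n - 1) (by omega)
      (applyMove (play D (List.replicate ((D s).length - (p+1)) (.relocate s s'))) (.retrieve s))
      (by omega)
    refine ⟨List.replicate ((D s).length - (p+1)) (.relocate s s') ++ (.retrieve s :: ms2),
      ?_, ?_⟩
    · rw [allEnabled_append]
      exact ⟨h1, ⟨⟨x, hgl, hmin⟩, hms2a⟩⟩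
    · intro t
      rw [play_append]
      exact hms2b t

end BRPaux

/-- Theorem 3, Property 5: if every stack is nonempty and `V` is a
virtual layer satisfying the conditions of Property 5, then every feasible move
sequence contains at least one non-BG relocation of a block of `V`; that is,
`f_nonBG(V) ≥ 1`. -/
theorem brp_property5 {B S : ℕ} (hS : 2 ≤ S) (hB : 1 ≤ B)
    (C : Config B S) (hC : IsConfig C) (hne : ∀ s, C s ≠ [])
    (V : Set (Fin B)) (h5 : P5 C V) :
    (∀ ms, Feasible C ms → 1 ≤ countMoves (RelocNonBGIn V) C ms) ∧
    1 ≤ fNonBG C V := by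
  classical
  obtain ⟨hVL, hcond1, hcond2⟩ := h5
  have hch : ∀ s : Fin S, ∃ b : Fin B,
      (b ∈ V ∧ b ∈ C s) ∧ ∀ y : Fin B, (y ∈ V ∧ y ∈ C s) → y = b := hVL
  choose v hv1 hv2 using hch
  have hvuniq : ∀ s x, x ∈ V → x ∈ C s → x = v s := fun s x h1 h2 => hv2 s x ⟨h1, h2⟩
  have hj' : ∀ s, ∃ k, (C s)[k]? = some (v s) := fun s => List.mem_iff_getElem?.1 (hv1 s).2
  choose j hj using hj'
  have hCtot : ∀ x, BRPaux.totCount C x = 1 := hC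
  have hcnt1 : ∀ s x, (C s).count x ≤ 1 :=
    fun s x => le_trans (BRPaux.count_single C x s) (le_of_eq (hCtot x))
  obtain ⟨sa, a₀, b₀, hb₀V, ⟨i₀, k₀, hik, hai, hbk⟩, hsmall⟩ := hcond1
  have hb₀ : b₀ = v sa := hvuniq sa b₀ hb₀V (List.mem_iff_getElem?.2 ⟨k₀, hbk⟩)
  have hk₀ : k₀ = j sa := by
    rw [hb₀] at hbk
    by_contra hne
    exact absurd (BRPaux.two_le_count_of_getElem? hbk (hj sa) hne)
      (by have := hcnt1 sa (v sa); omega)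
  have hmain := BRPaux.brp_key hj (fun s => (hv1 s).1) hvuniq hCtot
    (show i₀ < j sa by omega) hai hsmall hcond2
  have part1 : ∀ ms, Feasible C ms → 1 ≤ countMoves (RelocNonBGIn V) C ms := by
    intro ms hf
    exact hmain ms C (fun x => le_of_eq (hCtot x)) (fun s => List.take_prefix _ _) hf.1 hf.2
  refine ⟨part1, ?_⟩
  obtain ⟨ms0, hms0a, hms0b⟩ := BRPaux.exists_feasible hS (BRPaux.totLen C) C rfl
  have hne2 : {n | ∃ ms, Feasible C ms ∧ countMoves (RelocNonBGIn V) C ms = n}.Nonempty :=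
    ⟨_, ms0, ⟨hms0a, hms0b⟩, rfl⟩
  exact le_csInf hne2 (fun n hn => by
    obtain ⟨ms, hf, hc⟩ := hn
    exact hc ▸ part1 ms hf)
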